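/- There exist a universal constant C₀ ∈ (0,1) and, for each r ≥ 0, a constant c_r > 0 such that for every orthonormal system Φ_N = {φ_j}_{j=1}^N in L₂(Ω,μ) and all integers 0 < v ≤ C₀N and m ≥ 1, one has ϱ^{ls}_{m,v}(A₁^r(Φ_N), Φ_N, L₂(Ω,μ)) ≥ σ_v(A₁^r(Φ_N), Φ_N)₂ ≥ c_r v^{−r−1/2}. -/

import Mathlib

open MeasureTheory

noncomputable section

/-- The `L_2(Ω,μ)` norm `(∫_Ω |f|² dμ)^{1/2}` of a complex-valued function. -/
def l2n {Ω : Type*} [MeasurableSpace Ω] (μ : Measure Ω) (f : Ω → ℂ) : ℝ :=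
  (∫ x, ‖f x‖ ^ 2 ∂μ) ^ (1 / 2 : ℝ)

/-- `Σ_v(D_N)`: the set of all `v`-term approximants with respect to the
dictionary `D_N = {g 0, …, g (N-1)}`. -/
def SparseSet {Ω : Type*} [TopologicalSpace Ω] {N : ℕ} (g : Fin N → C(Ω, ℂ)) (v : ℕ) :
    Set C(Ω, ℂ) :=
  {h | ∃ J : Finset (Fin N), J.card = v ∧ h ∈ Submodule.span ℂ (g '' ↑J)}

/-- The probability measure `μ_ξ = (1/2)μ + (1/(2m)) ∑_j δ_{ξ^j}`. -/
def discMeasure {Ω : Type*} [MeasurableSpace Ω] (μ : Measure Ω) {m : ℕ} (ξ : Fin m → Ω) :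
    Measure Ω :=
  (1 / 2 : ENNReal) • μ + (2 * (m : ENNReal))⁻¹ • ∑ j, Measure.dirac (ξ j)

/-- `u` is a least squares approximant of `f` from the subspace `L` for the points `ξ`:
it minimizes `(1/m) ∑_j ‖f(ξ^j) - u(ξ^j)‖²` over `L`. -/
def IsLSMin {Ω : Type*} [TopologicalSpace Ω] {m : ℕ} (ξ : Fin m → Ω) (f : Ω → ℂ)
    (L : Submodule ℂ C(Ω, ℂ)) (u : C(Ω, ℂ)) : Prop :=
  u ∈ L ∧ ∀ u' ∈ L,
    (1 / (m : ℝ)) * ∑ j, ‖f (ξ j) - u (ξ j)‖ ^ 2 ≤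
      (1 / (m : ℝ)) * ∑ j, ‖f (ξ j) - u' (ξ j)‖ ^ 2

/-- The points `ξ` provide one-sided universal discretization with constant `C₁`
for all functions in `S`: `C₁‖f‖₂² ≤ (1/m) ∑_j |f(ξ^j)|²`. -/
def OneSidedUD {Ω : Type*} [TopologicalSpace Ω] [MeasurableSpace Ω] (μ : Measure Ω)
    {m : ℕ} (ξ : Fin m → Ω) (C₁ : ℝ) (S : Set C(Ω, ℂ)) : Prop :=
  ∀ f ∈ S, C₁ * (l2n μ ⇑f) ^ 2 ≤ (1 / (m : ℝ)) * ∑ j, ‖f (ξ j)‖ ^ 2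

/-- The class `A₁^r(Φ_N) = { ∑_j c_j φ_j : ∑_j |c_j| j^r ≤ 1 }` (indices `j = 1,…,N`). -/
def A1r {Ω : Type*} [TopologicalSpace Ω] {N : ℕ} (φ : Fin N → C(Ω, ℂ)) (r : ℝ) :
    Set C(Ω, ℂ) :=
  {h | ∃ c : Fin N → ℂ, h = ∑ j, c j • φ j ∧ ∑ j, ‖c j‖ * ((j : ℕ) + 1 : ℝ) ^ r ≤ 1}

lemma parseval_aux {Ω : Type*} [TopologicalSpace Ω] [CompactSpace Ω] [MeasurableSpace Ω]
    [OpensMeasurableSpace Ω] (μ : Measure Ω) [IsFiniteMeasure μ] {N : ℕ}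
    (φ : Fin N → C(Ω, ℂ))
    (hφ : ∀ i j : Fin N, (∫ x, φ i x * (starRingEnd ℂ) (φ j x) ∂μ) = if i = j then 1 else 0)
    (c : Fin N → ℂ) :
    ∫ x, ‖(∑ j, c j • φ j : C(Ω, ℂ)) x‖ ^ 2 ∂μ = ∑ j, ‖c j‖ ^ 2 := by
  have hint : ∀ i j : Fin N,
      Integrable (fun x => φ i x * (starRingEnd ℂ) (φ j x)) μ := by
    intro i j
    exact (((φ i).continuous.mul ((Complex.continuous_conj).comp
      (φ j).continuous))).integrable_of_hasCompactSupport (HasCompactSupport.of_compactSpace _)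
  have h2 : ∀ z : ℂ, ‖z‖ ^ 2 = (z * (starRingEnd ℂ) z).re := by
    intro z
    rw [Complex.mul_conj]
    norm_num [Complex.normSq_eq_norm_sq, ← Complex.ofReal_pow]
  have key : ∀ x, ‖(∑ j, c j • φ j : C(Ω, ℂ)) x‖ ^ 2 =
      ∑ i, ∑ j, ((c i * (starRingEnd ℂ) (c j)) * (φ i x * (starRingEnd ℂ) (φ j x))).re := by
    intro x
    have h1 : ((∑ j, c j • φ j : C(Ω, ℂ)) x) = ∑ j, c j * φ j x := by simp
    rw [h1, h2, map_sum, Finset.sum_mul_sum, Complex.re_sum]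
    refine Finset.sum_congr rfl fun i _ => ?_
    rw [Complex.re_sum]
    refine Finset.sum_congr rfl fun j _ => ?_
    rw [map_mul]; ring_nf
  calc ∫ x, ‖(∑ j, c j • φ j : C(Ω, ℂ)) x‖ ^ 2 ∂μ
      = ∫ x, ∑ i, ∑ j, ((c i * (starRingEnd ℂ) (c j)) *
          (φ i x * (starRingEnd ℂ) (φ j x))).re ∂μ := by
        exact integral_congr_ae (Filter.Eventually.of_forall key)
    _ = ∑ i, ∑ j, ∫ x, ((c i * (starRingEnd ℂ) (c j)) *
          (φ i x * (starRingEnd ℂ) (φ j x))).re ∂μ := by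
        rw [integral_finset_sum]
        · exact Finset.sum_congr rfl fun i _ => integral_finset_sum _
            (fun j _ => ((hint i j).const_mul _).re)
        · exact fun i _ => integrable_finset_sum _ fun j _ => ((hint i j).const_mul _).re
    _ = ∑ i, ∑ j, ((c i * (starRingEnd ℂ) (c j)) * ∫ x,
          (φ i x * (starRingEnd ℂ) (φ j x)) ∂μ).re := by
        refine Finset.sum_congr rfl fun i _ => Finset.sum_congr rfl fun j _ => ?_
        simp only [← RCLike.re_to_complex]
        rw [integral_re ((hint i j).const_mul _), integral_const_mul]
    _ = ∑ j, ‖c j‖ ^ 2 := by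
        rw [Finset.sum_comm]
        refine Finset.sum_congr rfl fun j _ => ?_
        rw [Finset.sum_eq_single j]
        · rw [hφ, if_pos rfl, mul_one, h2]
        · intro i _ hij
          rw [hφ, if_neg hij, mul_zero, Complex.zero_re]
        · intro h; exact absurd (Finset.mem_univ j) h

lemma le_rpow_half {B X : ℝ} (hB : 0 ≤ B) (h : B ^ 2 ≤ X) : B ≤ X ^ (1 / 2 : ℝ) := by
  calc B = (B ^ 2) ^ (1 / 2 : ℝ) := by
        rw [← Real.rpow_natCast B 2, ← Real.rpow_mul hB]; norm_num
    _ ≤ X ^ (1 / 2 : ℝ) := Real.rpow_le_rpow (sq_nonneg B) h (by norm_num)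

lemma rpow_sq_eq {x a : ℝ} (hx : 0 ≤ x) : (x ^ a) ^ 2 = x ^ (2 * a) := by
  rw [← Real.rpow_natCast (x ^ a) 2, ← Real.rpow_mul hx]; ring_nf

lemma l2n_nonneg {Ω : Type*} [MeasurableSpace Ω] (μ : Measure Ω) (f : Ω → ℂ) :
    0 ≤ l2n μ f :=
  Real.rpow_nonneg (integral_nonneg fun x => by positivity) _

/-- lower bound for sparse least squares recovery on `A₁^r(Φ_N)` for an
orthonormal system `Φ_N`.  The inequality `ϱ^{ls}_{m,v} ≥ σ_v(A₁^r(Φ_N),Φ_N)₂` is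
rendered as: for every collection of points `ξ ∈ Ω^m` and every `ε > 0` there is
`f ∈ A₁^r(Φ_N)` such that every `v`-element subspace `L ∈ X_v(Φ_N)` and every least
squares approximant `u = LS(ξ,L)(f)` satisfy `σ_v(A₁^r(Φ_N),Φ_N)₂ - ε ≤ ‖f - u‖₂`. -/
theorem stmt7 :
    ∃ C₀ : ℝ, 0 < C₀ ∧ C₀ < 1 ∧
      ∀ r : ℝ, 0 ≤ r → ∃ c : ℝ, 0 < c ∧
        ∀ (d : ℕ) (Ω : Set (Fin d → ℝ)) [CompactSpace Ω] (μ : Measure Ω)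
          [IsProbabilityMeasure μ] (N : ℕ) (φ : Fin N → C(Ω, ℂ)),
          (∀ i j : Fin N,
            (∫ x, φ i x * (starRingEnd ℂ) (φ j x) ∂μ) = if i = j then 1 else 0) →
          ∀ v m : ℕ, 0 < v → (v : ℝ) ≤ C₀ * N → 1 ≤ m →
            (∀ ξ : Fin m → Ω, ∀ ε : ℝ, 0 < ε →
              ∃ f ∈ A1r φ r, ∀ J : Finset (Fin N), J.card = v →
                ∀ u : C(Ω, ℂ), IsLSMin ξ ⇑f (Submodule.span ℂ (φ '' ↑J)) u →
                  (⨆ f' : A1r φ r, ⨅ h : SparseSet φ v,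
                      l2n μ ⇑((f' : C(Ω, ℂ)) - (h : C(Ω, ℂ)))) - ε ≤
                    l2n μ ⇑(f - u)) ∧
            c * (v : ℝ) ^ (-r - 1 / 2 : ℝ) ≤
              ⨆ f' : A1r φ r, ⨅ h : SparseSet φ v,
                l2n μ ⇑((f' : C(Ω, ℂ)) - (h : C(Ω, ℂ))) := by
  refine ⟨1 / 2, by norm_num, by norm_num, fun r hr => ?_⟩
  refine ⟨(2 : ℝ) ^ (-r - 1 : ℝ), Real.rpow_pos_of_pos two_pos _, ?_⟩
  intro d Ω _ μ _ N φ hφ v m hv hvN _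
  -- basic numerics
  have hvR : (0 : ℝ) < (v : ℝ) := by exact_mod_cast hv
  have h2v : 2 * v ≤ N := by
    have : (2 * v : ℝ) ≤ N := by push_cast; linarith
    exact_mod_cast this
  have hvleN : v ≤ N := le_trans (by omega) h2v
  -- injectivity of φ
  have hφinj : Function.Injective φ := by
    intro i j hij
    by_contra hne
    have h0 := hφ i j
    rw [if_neg hne, hij] at h0
    have h1 := hφ j j
    rw [if_pos rfl] at h1
    exact one_ne_zero (by rw [← h1, h0])
  -- representation of sparse elements
  have hrep : ∀ (J : Finset (Fin N)) (g : C(Ω, ℂ)), g ∈ Submodule.span ℂ (φ '' ↑J) →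
      ∃ b : Fin N → ℂ, (∀ j, j ∉ J → b j = 0) ∧ g = ∑ j, b j • φ j := by
    intro J g hg
    classical
    rw [← Finset.coe_image, Submodule.mem_span_finset] at hg
    obtain ⟨a, _, ha⟩ := hg
    refine ⟨fun j => if j ∈ J then a (φ j) else 0, fun j hj => if_neg hj, ?_⟩
    rw [← ha, Finset.sum_image (fun x _ y _ hxy => hφinj hxy)]
    rw [show (∑ j, (if j ∈ J then a (φ j) else 0) • φ j)
        = ∑ j, (if j ∈ J then a (φ j) • φ j else 0) from
      Finset.sum_congr rfl fun j _ => by split <;> simp]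
    rw [Finset.sum_ite_mem, Finset.univ_inter]
  -- the normalizing constant
  set A : ℝ := ∑ k ∈ Finset.range (2 * v), ((k : ℝ) + 1) ^ r with hA
  have hApos : 0 < A := by
    apply Finset.sum_pos (fun k _ => by positivity)
    exact Finset.nonempty_range_iff.mpr (by omega)
  have hAle : A ≤ (2 * (v : ℝ)) ^ (r + 1) := by
    have h1 : A ≤ ∑ _k ∈ Finset.range (2 * v), (2 * (v : ℝ)) ^ r := by
      apply Finset.sum_le_sum
      intro k hk
      apply Real.rpow_le_rpow (by positivity) _ hr
      have : (k : ℝ) + 1 ≤ (2 * v : ℕ) := by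
        exact_mod_cast Nat.succ_le_of_lt (Finset.mem_range.mp hk)
      push_cast at this ⊢; linarith
    rw [Finset.sum_const, Finset.card_range] at h1
    calc A ≤ (2 * v : ℕ) • (2 * (v : ℝ)) ^ r := h1
      _ = (2 * (v : ℝ)) ^ (r + 1) := by
        rw [Real.rpow_add (by positivity), Real.rpow_one, nsmul_eq_mul]
        push_cast; ring
  -- the extremal function
  set c₀ : Fin N → ℂ := fun j => if (j : ℕ) < 2 * v then ((A⁻¹ : ℝ) : ℂ) else 0 with hc₀
  have hc₀norm : ∀ j : Fin N, ‖c₀ j‖ = if (j : ℕ) < 2 * v then A⁻¹ else 0 := by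
    intro j
    simp only [hc₀]
    split
    · rw [Complex.norm_real, Real.norm_eq_abs, abs_of_pos (by positivity)]
    · simp
  have hfilter : ∀ (G : ℕ → ℝ), (∑ j : Fin N, if (j : ℕ) < 2 * v then G (j : ℕ) else 0)
      = ∑ k ∈ Finset.range (2 * v), G k := by
    intro G
    rw [Fin.sum_univ_eq_sum_range (fun k => if k < 2 * v then G k else 0) N,
      ← Finset.sum_filter,
      show (Finset.range N).filter (· < 2 * v) = Finset.range (2 * v) from
        Finset.ext fun k => by simp; omega]
  have hfiltN : ∀ {M : Type} [AddCommMonoid M] (G : ℕ → M),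
      (∑ j : Fin N, if (j : ℕ) < 2 * v then G (j : ℕ) else 0)
      = ∑ k ∈ Finset.range (2 * v), G k := by
    intro M _ G
    rw [Fin.sum_univ_eq_sum_range (fun k => if k < 2 * v then G k else 0) N,
      ← Finset.sum_filter,
      show (Finset.range N).filter (· < 2 * v) = Finset.range (2 * v) from
        Finset.ext fun k => by simp; omega]
  have hf₀mem : (∑ j, c₀ j • φ j : C(Ω, ℂ)) ∈ A1r φ r := by
    refine ⟨c₀, rfl, ?_⟩
    have he : (∑ j : Fin N, ‖c₀ j‖ * ((j : ℕ) + 1 : ℝ) ^ r)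
        = ∑ j : Fin N, (if (j : ℕ) < 2 * v then A⁻¹ * ((j : ℕ) + 1 : ℝ) ^ r else 0) := by
      refine Finset.sum_congr rfl fun j _ => ?_
      rw [hc₀norm]; split <;> simp
    rw [he, hfiltN (fun k => A⁻¹ * ((k : ℝ) + 1) ^ r), ← Finset.mul_sum, ← hA,
      inv_mul_cancel₀ (ne_of_gt hApos)]
  -- the big-coefficient index set
  set T : Finset (Fin N) := Finset.univ.filter (fun j : Fin N => (j : ℕ) < 2 * v) with hT
  have hTcard : T.card = 2 * v := by
    rw [hT, Finset.card_filter, hfiltN (fun _ => (1 : ℕ)), Finset.sum_const,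
      Finset.card_range, smul_eq_mul, mul_one]
  -- Parseval for our system
  have hl2n : ∀ cc : Fin N → ℂ,
      l2n μ ⇑(∑ j, cc j • φ j : C(Ω, ℂ)) = (∑ j, ‖cc j‖ ^ 2) ^ (1 / 2 : ℝ) := by
    intro cc
    simp only [l2n]
    rw [parseval_aux μ φ hφ cc]
  -- the key coefficient estimate
  have hkey : ∀ (J : Finset (Fin N)) (b : Fin N → ℂ), J.card = v → (∀ j ∉ J, b j = 0) →
      (2 : ℝ) ^ (-r - 1 : ℝ) * (v : ℝ) ^ (-r - 1 / 2 : ℝ)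
        ≤ (∑ j, ‖c₀ j - b j‖ ^ 2) ^ (1 / 2 : ℝ) := by
    intro J b hJ hb
    apply le_rpow_half (by positivity)
    have hlow : (v : ℝ) * (A⁻¹) ^ 2 ≤ ∑ j, ‖c₀ j - b j‖ ^ 2 := by
      have h1 : ∑ j ∈ T \ J, ‖c₀ j - b j‖ ^ 2 ≤ ∑ j, ‖c₀ j - b j‖ ^ 2 :=
        Finset.sum_le_sum_of_subset_of_nonneg (Finset.subset_univ _)
          (fun j _ _ => by positivity)
      have h2 : ∑ j ∈ T \ J, ‖c₀ j - b j‖ ^ 2 = ((T \ J).card : ℝ) * (A⁻¹) ^ 2 := by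
        rw [Finset.sum_congr rfl (fun j hj => ?_), Finset.sum_const, nsmul_eq_mul]
        obtain ⟨hjT, hjJ⟩ := Finset.mem_sdiff.mp hj
        rw [hb j hjJ, sub_zero, hc₀norm j,
          if_pos (by simpa [hT, Finset.mem_filter] using hjT)]
      have h3 : v ≤ (T \ J).card := by
        have := Finset.le_card_sdiff J T
        omega
      calc (v : ℝ) * (A⁻¹) ^ 2 ≤ ((T \ J).card : ℝ) * (A⁻¹) ^ 2 := by
            apply mul_le_mul_of_nonneg_right _ (by positivity)
            exact_mod_cast h3
        _ = ∑ j ∈ T \ J, ‖c₀ j - b j‖ ^ 2 := h2.symm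
        _ ≤ _ := h1
    refine le_trans ?_ hlow
    have hAinv : ((2 * (v : ℝ)) ^ (r + 1 : ℝ))⁻¹ ≤ A⁻¹ :=
      inv_anti₀ hApos hAle
    have hq0 : (0 : ℝ) ≤ ((2 * (v : ℝ)) ^ (r + 1 : ℝ))⁻¹ := by positivity
    have hq : (((2 * (v : ℝ)) ^ (r + 1 : ℝ))⁻¹) ^ 2 ≤ (A⁻¹) ^ 2 :=
      pow_le_pow_left₀ hq0 hAinv 2
    have hqe : ((2 * (v : ℝ)) ^ (r + 1 : ℝ))⁻¹ = (2 * (v : ℝ)) ^ (-r - 1 : ℝ) := by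
      rw [show (-r - 1 : ℝ) = -(r + 1) by ring, Real.rpow_neg (by positivity)]
    have main : ((2 : ℝ) ^ (-r - 1 : ℝ) * (v : ℝ) ^ (-r - 1 / 2 : ℝ)) ^ 2
        = (v : ℝ) * ((2 * (v : ℝ)) ^ (-r - 1 : ℝ)) ^ 2 := by
      rw [Real.mul_rpow (by norm_num) hvR.le, mul_pow, mul_pow,
        rpow_sq_eq (by norm_num : (0:ℝ) ≤ 2), rpow_sq_eq hvR.le, rpow_sq_eq hvR.le]
      have e4 : (v : ℝ) * (v : ℝ) ^ (2 * (-r - 1)) = (v : ℝ) ^ (1 + 2 * (-r - 1)) := by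
        rw [Real.rpow_add hvR, Real.rpow_one]
      have e5 : (v : ℝ) ^ (2 * (-r - 1 / 2)) = (v : ℝ) ^ (1 + 2 * (-r - 1)) := by
        congr 1; ring
      rw [e5, ← e4]; ring
    calc ((2 : ℝ) ^ (-r - 1 : ℝ) * (v : ℝ) ^ (-r - 1 / 2 : ℝ)) ^ 2
        = (v : ℝ) * (((2 * (v : ℝ)) ^ (r + 1 : ℝ))⁻¹) ^ 2 := by rw [main, hqe]
      _ ≤ (v : ℝ) * (A⁻¹) ^ 2 := mul_le_mul_of_nonneg_left hq hvR.le
  -- lower bound for distance to sparse elements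
  have hsparse_lb : ∀ g : C(Ω, ℂ), g ∈ SparseSet φ v →
      (2 : ℝ) ^ (-r - 1 : ℝ) * (v : ℝ) ^ (-r - 1 / 2 : ℝ)
        ≤ l2n μ ⇑((∑ j, c₀ j • φ j : C(Ω, ℂ)) - g) := by
    rintro g ⟨J, hJ, hmem⟩
    obtain ⟨b, hb0, hgeq⟩ := hrep J g hmem
    have hdiff : (∑ j, c₀ j • φ j : C(Ω, ℂ)) - g = ∑ j, (c₀ j - b j) • φ j := by
      rw [hgeq, ← Finset.sum_sub_distrib]
      exact Finset.sum_congr rfl fun j _ => (sub_smul _ _ _).symm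
    rw [hdiff, hl2n]
    exact hkey J b hJ hb0
  -- uniform upper bound on the class
  have hupper : ∀ g : C(Ω, ℂ), g ∈ A1r φ r → l2n μ ⇑g ≤ 1 := by
    rintro g ⟨cg, hgeq, hcg⟩
    rw [hgeq, hl2n]
    apply Real.rpow_le_one (by positivity) ?_ (by norm_num)
    have h1 : ∀ j : Fin N, ‖cg j‖ ≤ ‖cg j‖ * ((j : ℕ) + 1 : ℝ) ^ r := fun j =>
      le_mul_of_one_le_right (norm_nonneg _) (Real.one_le_rpow (by norm_num) hr)
    have hsum1 : ∑ j, ‖cg j‖ ≤ 1 :=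
      le_trans (Finset.sum_le_sum fun j _ => h1 j) hcg
    have heach : ∀ j : Fin N, ‖cg j‖ ≤ 1 := fun j =>
      le_trans (Finset.single_le_sum (fun i _ => norm_nonneg _) (Finset.mem_univ j)) hsum1
    calc ∑ j, ‖cg j‖ ^ 2 ≤ ∑ j, ‖cg j‖ :=
        Finset.sum_le_sum fun j _ => by nlinarith [norm_nonneg (cg j), heach j]
      _ ≤ 1 := hsum1
  -- nonemptiness
  obtain ⟨J₀, _, hJ₀⟩ := Finset.exists_subset_card_eq
    (show v ≤ (Finset.univ : Finset (Fin N)).card by simpa using hvleN)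
  haveI hne1 : Nonempty ↥(SparseSet φ v) := ⟨⟨0, J₀, hJ₀, Submodule.zero_mem _⟩⟩
  haveI hne2 : Nonempty ↥(A1r φ r) := ⟨⟨0, 0, by simp, by simp⟩⟩
  have hbdd : ∀ fC : C(Ω, ℂ),
      BddBelow (Set.range fun h : ↥(SparseSet φ v) => l2n μ ⇑(fC - ↑h)) :=
    fun fC => ⟨0, by rintro x ⟨h, rfl⟩; exact l2n_nonneg μ _⟩
  have hinf_le_one : ∀ f' : ↥(A1r φ r),
      (⨅ h : ↥(SparseSet φ v), l2n μ ⇑((f' : C(Ω, ℂ)) - ↑h)) ≤ 1 := by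
    intro f'
    refine le_trans (ciInf_le (hbdd _) ⟨0, J₀, hJ₀, Submodule.zero_mem _⟩) ?_
    show l2n μ ⇑((f' : C(Ω, ℂ)) - 0) ≤ 1
    rw [sub_zero]
    exact hupper _ f'.2
  have hbddA : BddAbove (Set.range fun f' : ↥(A1r φ r) =>
      ⨅ h : ↥(SparseSet φ v), l2n μ ⇑((f' : C(Ω, ℂ)) - ↑h)) :=
    ⟨1, by rintro x ⟨f', rfl⟩; exact hinf_le_one f'⟩
  constructor
  · intro ξ ε hε
    obtain ⟨f', hf'⟩ := exists_lt_of_lt_ciSup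
      (show (⨆ f' : ↥(A1r φ r), ⨅ h : ↥(SparseSet φ v),
          l2n μ ⇑((f' : C(Ω, ℂ)) - ↑h)) - ε < _ from sub_lt_self _ hε)
    refine ⟨↑f', f'.2, fun J hJ u hu => ?_⟩
    have hu_sp : u ∈ SparseSet φ v := ⟨J, hJ, hu.1⟩
    have h1 : (⨅ h : ↥(SparseSet φ v), l2n μ ⇑((f' : C(Ω, ℂ)) - ↑h))
        ≤ l2n μ ⇑((f' : C(Ω, ℂ)) - u) := ciInf_le (hbdd _) ⟨u, hu_sp⟩
    exact le_trans (le_of_lt hf') h1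
  · calc (2 : ℝ) ^ (-r - 1 : ℝ) * (v : ℝ) ^ (-r - 1 / 2 : ℝ)
        ≤ ⨅ h : ↥(SparseSet φ v), l2n μ ⇑((∑ j, c₀ j • φ j : C(Ω, ℂ)) - ↑h) :=
          le_ciInf fun h => hsparse_lb _ h.2
      _ ≤ ⨆ f' : ↥(A1r φ r), ⨅ h : ↥(SparseSet φ v),
            l2n μ ⇑((f' : C(Ω, ℂ)) - ↑h) :=
          le_ciSup hbddA ⟨∑ j, c₀ j • φ j, hf₀mem⟩
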